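/- arXiv:1204.4987 — 2 statements merged into one kernel-verified Lean document; each statement's English description precedes it below -/
import Mathlib

section
/- For b₀<0, the Gerstner map Φ(t):(a,b)↦(x(t,a,b),z(t,a,b)) is injective on ℝ×(-∞,b₀]. -/
open Complex Real

lemma gerstner_key (k b₀ : ℝ) (hk : 0 < k) :
    ∀ z ∈ {z : ℂ | -b₀ ≤ z.im}, ∀ z' ∈ {z : ℂ | -b₀ ≤ z.im},
      ‖Complex.exp (Complex.I * k * z) - Complex.exp (Complex.I * k * z')‖
        ≤ (k * Real.exp (k * b₀)) * ‖z - z'‖ := by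
  intro z hz z' hz'
  have := Convex.norm_image_sub_le_of_norm_hasDerivWithin_le
    (f := fun w => Complex.exp (Complex.I * k * w))
    (f' := fun w => Complex.I * k * Complex.exp (Complex.I * k * w))
    (s := {z : ℂ | -b₀ ≤ z.im}) (C := k * Real.exp (k * b₀))
    (fun w _ => ?_) (fun w hw => ?_) (convex_halfSpace_im_ge _) hz' hz
  · exact this
  · have h1 : HasDerivAt (fun w => Complex.exp (Complex.I * k * w))
        (Complex.exp (Complex.I * k * w) * (Complex.I * k)) w := by
      have : HasDerivAt (fun w : ℂ => Complex.I * k * w) (Complex.I * k) w := by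
        simpa using (hasDerivAt_id w).const_mul (Complex.I * (k:ℂ))
      exact this.cexp
    exact (h1.congr_deriv (by ring)).hasDerivWithinAt
  · have : ‖Complex.I * (k:ℂ) * Complex.exp (Complex.I * k * w)‖
        = k * Real.exp ((Complex.I * k * w).re) := by
      simp [Complex.norm_exp, abs_of_pos hk]
    rw [this]
    have hre : (Complex.I * k * w).re = -(k * w.im) := by simp
    rw [hre]
    have : -(k * w.im) ≤ k * b₀ := by
      have : -b₀ ≤ w.im := hw
      nlinarith
    exact mul_le_mul_of_nonneg_left (Real.exp_le_exp.2 this) hk.le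

/-- For `b₀ < 0` the Gerstner map `Φ(t)` is injective on `ℝ × (-∞, b₀]`. -/
theorem gerstner_injective (k c t b₀ : ℝ) (hk : 0 < k) (hb₀ : b₀ < 0) :
    Set.InjOn (fun p : ℝ × ℝ =>
        (p.1 - Real.exp (k * p.2) / k * Real.sin (k * p.1 - k * c * t),
         p.2 + Real.exp (k * p.2) / k * Real.cos (k * p.1 - k * c * t)))
      {p : ℝ × ℝ | p.2 ≤ b₀} := by
  intro p hp q hq h
  simp only [Prod.mk.injEq] at h
  obtain ⟨h1, h2⟩ := h
  have hk' : k ≠ 0 := hk.ne'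
  -- real equations cleared of division
  have e1 : Real.exp (k * p.2) * Real.sin (k * p.1 - k * c * t)
      - Real.exp (k * q.2) * Real.sin (k * q.1 - k * c * t) = k * (p.1 - q.1) := by
    field_simp at h1; ring_nf at h1 ⊢; nlinarith [h1]
  have e2 : Real.exp (k * p.2) * Real.cos (k * p.1 - k * c * t)
      - Real.exp (k * q.2) * Real.cos (k * q.1 - k * c * t) = k * (q.2 - p.2) := by
    field_simp at h2; ring_nf at h2 ⊢; nlinarith [h2]
  set w : ℂ := ⟨p.1, p.2⟩ with hw
  set w' : ℂ := ⟨q.1, q.2⟩ with hw'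
  set zp : ℂ := ⟨p.1, -p.2⟩ with hzp
  set zq : ℂ := ⟨q.1, -q.2⟩ with hzq
  -- the complex identity
  have key : Complex.exp (Complex.I * k * zp) * Complex.exp (-(Complex.I * (k * c * t)))
      - Complex.exp (Complex.I * k * zq) * Complex.exp (-(Complex.I * (k * c * t)))
      = k * Complex.I * (w - w') := by
    rw [← Complex.exp_add, ← Complex.exp_add]
    have hp1 : Complex.I * k * zp + -(Complex.I * (k * c * t))
        = Complex.mk (k * p.2) (k * p.1 - k * c * t) := by
      apply Complex.ext <;> simp [hzp] <;> ring
    have hq1 : Complex.I * k * zq + -(Complex.I * (k * c * t))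
        = Complex.mk (k * q.2) (k * q.1 - k * c * t) := by
      apply Complex.ext <;> simp [hzq] <;> ring
    rw [hp1, hq1]
    apply Complex.ext <;>
      simp [Complex.exp_re, Complex.exp_im, hw, hw'] <;>
      [linarith [e2]; linarith [e1]]
  have hnorm : ‖Complex.exp (Complex.I * k * zp) - Complex.exp (Complex.I * k * zq)‖
      = k * ‖w - w'‖ := by
    have : (Complex.exp (Complex.I * k * zp) - Complex.exp (Complex.I * k * zq))
        * Complex.exp (-(Complex.I * (k * c * t))) = k * Complex.I * (w - w') := by
      rw [sub_mul]; exact key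
    have hn := congrArg (fun z => ‖z‖) this
    simp only [norm_mul] at hn
    rw [Complex.norm_exp] at hn
    simp at hn
    simpa [abs_of_pos hk] using hn
  have hmem : zp ∈ {z : ℂ | -b₀ ≤ z.im} := by simp [hzp]; exact hp
  have hmem' : zq ∈ {z : ℂ | -b₀ ≤ z.im} := by simp [hzq]; exact hq
  have hb := gerstner_key k b₀ hk zp hmem zq hmem'
  rw [hnorm] at hb
  have hzz : ‖zp - zq‖ = ‖w - w'‖ := by
    have hc : zp - zq = (starRingEnd ℂ) (w - w') := by
      apply Complex.ext <;> simp [hzp, hzq, hw, hw']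
    rw [hc, RCLike.norm_conj]
  rw [hzz] at hb
  have hlt : Real.exp (k * b₀) < 1 := by
    rw [Real.exp_lt_one_iff]; nlinarith
  have hd : ‖w - w'‖ ≤ Real.exp (k * b₀) * ‖w - w'‖ :=
    le_of_mul_le_mul_left (by linarith) hk
  have hww : ‖w - w'‖ = 0 :=
    le_antisymm (by nlinarith [norm_nonneg (w - w')]) (norm_nonneg _)
  have : w = w' := by rwa [← sub_eq_zero, ← norm_eq_zero]
  have h1' : p.1 = q.1 := congrArg Complex.re this
  have h2' : p.2 = q.2 := congrArg Complex.im this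
  exact Prod.ext h1' h2'
end

section
/- The vorticity γ=u_z-w_x of the Gerstner flow, computed in Lagrangian variables via γ=x_{ta}a_z+x_{tb}b_z-z_{ta}a_x-z_{tb}b_x, equals -2kce^{2kb}/(1-e^{2kb}); in particular γ depends only on the label b, is negative (for c>0, b<0), and tends to 0 as b→-∞. -/
/-- The vorticity `γ = u_z - w_x = x_{ta}a_z + x_{tb}b_z - z_{ta}a_x - z_{tb}b_x` of the
Gerstner flow equals `-2kce^{2kb}/(1-e^{2kb})`; it depends only on `b`, is negative, and
tends to `0` as `b → -∞`. -/
theorem gerstner_vorticity (k c : ℝ) (hk : 0 < k) (hc : 0 < c) :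
    (∀ b θ : ℝ, b < 0 →
      (-(k * c * Real.exp (k * b) * Real.sin θ)) *
          ((Real.exp (k * b) * Real.sin θ) / (1 - Real.exp (2 * k * b))) +
        (k * c * Real.exp (k * b) * Real.cos θ) *
          ((1 - Real.exp (k * b) * Real.cos θ) / (1 - Real.exp (2 * k * b))) -
        (k * c * Real.exp (k * b) * Real.cos θ) *
          ((1 + Real.exp (k * b) * Real.cos θ) / (1 - Real.exp (2 * k * b))) -
        (k * c * Real.exp (k * b) * Real.sin θ) *
          ((Real.exp (k * b) * Real.sin θ) / (1 - Real.exp (2 * k * b)))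
        = -(2 * k * c * Real.exp (2 * k * b)) / (1 - Real.exp (2 * k * b))) ∧
    (∀ b : ℝ, b < 0 → -(2 * k * c * Real.exp (2 * k * b)) / (1 - Real.exp (2 * k * b)) < 0) ∧
    Filter.Tendsto (fun b : ℝ => -(2 * k * c * Real.exp (2 * k * b)) / (1 - Real.exp (2 * k * b)))
      Filter.atBot (nhds 0) := by
  have hlt : ∀ b : ℝ, b < 0 → Real.exp (2 * k * b) < 1 := by
    intro b hb
    rw [show (1:ℝ) = Real.exp 0 by simp]
    exact Real.exp_lt_exp.mpr (by nlinarith)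
  refine ⟨?_, ?_, ?_⟩
  · intro b θ hb
    have hne : 1 - Real.exp (2 * k * b) ≠ 0 := by
      have := hlt b hb; linarith
    have h2 : Real.exp (2 * k * b) = Real.exp (k * b) * Real.exp (k * b) := by
      rw [← Real.exp_add]; ring_nf
    rw [mul_div_assoc', mul_div_assoc', mul_div_assoc', mul_div_assoc',
      ← add_div, div_sub_div_same, div_sub_div_same]
    congr 1
    rw [h2]
    linear_combination (-(2 * k * c * Real.exp (k * b) * Real.exp (k * b))) *
      Real.sin_sq_add_cos_sq θ
  · intro b hb
    have h1 := hlt b hb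
    have h2 := Real.exp_pos (2 * k * b)
    have h3 : 0 < 2 * k * c * Real.exp (2 * k * b) := by positivity
    apply div_neg_of_neg_of_pos <;> linarith
  · have h1 : Filter.Tendsto (fun b : ℝ => Real.exp (2 * k * b)) Filter.atBot (nhds 0) := by
      apply Real.tendsto_exp_atBot.comp
      exact Filter.Tendsto.const_mul_atBot (by linarith : (0:ℝ) < 2 * k) Filter.tendsto_id
    have : Filter.Tendsto (fun b : ℝ => -(2 * k * c * Real.exp (2 * k * b)) / (1 - Real.exp (2 * k * b)))
        Filter.atBot (nhds (-(2 * k * c * 0) / (1 - 0))) := by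
      apply Filter.Tendsto.div
      · exact (h1.const_mul (2 * k * c)).neg
      · exact (tendsto_const_nhds.sub h1)
      · norm_num
    simpa using this
end
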